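/- Let k ≥ 3 be an integer and let T be a finite tree. If Δ(T) > 4·3^(k-3), then χ_L(T) > k; equivalently, T admits no locating k-coloring. -/
import Mathlib


/-- A proper `k`-coloring of `G`: a function onto the `k` colors such that
adjacent vertices receive different colors. -/
def IsProperColoring {V : Type*} (G : SimpleGraph V) (k : ℕ) (f : V → Fin k) : Prop :=
  Function.Surjective f ∧ ∀ u v : V, G.Adj u v → f u ≠ f v

/-- The color code of a vertex `v`: its `i`-th coordinate is the distance from `v`
to the color class `f⁻¹(i)`. -/
noncomputable def colorCode {V : Type*} (G : SimpleGraph V) {k : ℕ} (f : V → Fin k)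
    (v : V) : Fin k → ℕ :=
  fun i => sInf {n : ℕ | ∃ u : V, f u = i ∧ G.dist v u = n}

/-- A locating `k`-coloring: a proper `k`-coloring in which distinct vertices have
distinct color codes. -/
def IsLocatingColoring {V : Type*} (G : SimpleGraph V) (k : ℕ) (f : V → Fin k) : Prop :=
  IsProperColoring G k f ∧ Function.Injective (colorCode G f)

section basic
variable {V : Type*} {G : SimpleGraph V} {k : ℕ} {f : V → Fin k} {i : Fin k}

lemma colorCode_exists_witness (hsurj : Function.Surjective f) (v : V) (i : Fin k) :
    ∃ w : V, f w = i ∧ G.dist v w = colorCode G f v i := by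
  have hne : {n : ℕ | ∃ u : V, f u = i ∧ G.dist v u = n}.Nonempty := by
    obtain ⟨u, hu⟩ := hsurj i
    exact ⟨G.dist v u, u, hu, rfl⟩
  exact Nat.sInf_mem hne

lemma colorCode_le (v w : V) (hi : f w = i) : colorCode G f v i ≤ G.dist v w :=
  Nat.sInf_le ⟨w, hi, rfl⟩

lemma colorCode_self (v : V) : colorCode G f v (f v) = 0 :=
  Nat.le_zero.mp (by simpa [SimpleGraph.dist_self] using colorCode_le v v rfl)

lemma colorCode_eq_zero (hconn : G.Connected) (hsurj : Function.Surjective f)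
    {v : V} (h : colorCode G f v i = 0) : f v = i := by
  obtain ⟨w, hw, hd⟩ := colorCode_exists_witness hsurj v i
  rw [h] at hd
  rw [hconn.dist_eq_zero_iff.mp hd]; exact hw

lemma colorCode_le_add (hconn : G.Connected) (hsurj : Function.Surjective f)
    (u v : V) (i : Fin k) : colorCode G f u i ≤ G.dist u v + colorCode G f v i := by
  obtain ⟨w, hw, hd⟩ := colorCode_exists_witness hsurj v i
  calc colorCode G f u i ≤ G.dist u w := colorCode_le u w hw
    _ ≤ G.dist u v + G.dist v w := hconn.dist_triangle
    _ = _ := by rw [hd]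

end basic

lemma arith_aux : ∀ d : ℕ, (d + 2) * 2 ^ (d + 1) ≤ 4 * 3 ^ d := by
  intro d
  induction d with
  | zero => norm_num
  | succ n ih =>
    have h1 : (n + 1 + 2) * 2 ^ (n + 1 + 1) = (2 * (n + 3)) * 2 ^ (n + 1) := by
      rw [pow_succ]; ring
    have h2 : (2 * (n + 3)) * 2 ^ (n + 1) ≤ (3 * (n + 2)) * 2 ^ (n + 1) :=
      Nat.mul_le_mul_right _ (by omega)
    calc (n + 1 + 2) * 2 ^ (n + 1 + 1) = (2 * (n + 3)) * 2 ^ (n + 1) := h1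
      _ ≤ (3 * (n + 2)) * 2 ^ (n + 1) := h2
      _ = 3 * ((n + 2) * 2 ^ (n + 1)) := by ring
      _ ≤ 3 * (4 * 3 ^ n) := by omega
      _ = 4 * 3 ^ (n + 1) := by rw [pow_succ]; ring

lemma arith_main {c j k : ℕ} (hc : 1 ≤ c) (hcj : c + 1 ≤ j) (hjk : j ≤ k) (hk : 3 ≤ k) :
    c * (2 ^ (c - 1) * 3 ^ (j - 1 - c)) ≤ 4 * 3 ^ (k - 3) := by
  rcases Nat.lt_or_ge c 2 with hc2 | hc2
  · have hc1 : c = 1 := by omega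
    subst hc1
    have e1 : j - 1 - 1 = j - 2 := by omega
    have : (3:ℕ) ^ (j - 2) ≤ 3 ^ (k - 2) := Nat.pow_le_pow_right (by norm_num) (by omega)
    have h2 : (3:ℕ) ^ (k - 2) = 3 * 3 ^ (k - 3) := by
      rw [← pow_succ']; congr 1; omega
    simp only [one_mul, Nat.sub_self, pow_zero, e1]
    omega
  · obtain ⟨d, rfl⟩ : ∃ d, c = d + 2 := ⟨c - 2, by omega⟩
    have e1 : d + 2 - 1 = d + 1 := by omega
    have e2 : d + (j - 1 - (d + 2)) ≤ k - 3 := by omega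
    calc (d + 2) * (2 ^ (d + 2 - 1) * 3 ^ (j - 1 - (d + 2)))
        = ((d + 2) * 2 ^ (d + 1)) * 3 ^ (j - 1 - (d + 2)) := by rw [e1]; ring
      _ ≤ (4 * 3 ^ d) * 3 ^ (j - 1 - (d + 2)) := Nat.mul_le_mul_right _ (arith_aux d)
      _ = 4 * 3 ^ (d + (j - 1 - (d + 2))) := by rw [pow_add]; ring
      _ ≤ 4 * 3 ^ (k - 3) :=
          Nat.mul_le_mul_left _ (Nat.pow_le_pow_right (by norm_num) e2)

/-- Key counting lemma: in a connected graph, the degree of any vertex is bounded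
under a locating `j`-coloring. -/
lemma key_count {V : Type*} [Fintype V] (G : SimpleGraph V) [DecidableRel G.Adj]
    (hconn : G.Connected) {j : ℕ} {f : V → Fin j} (hL : IsLocatingColoring G j f)
    (v : V) {k : ℕ} (hk : 3 ≤ k) (hjk : j ≤ k)
    (hdeg : 4 * 3 ^ (k - 3) < G.degree v) : False := by
  obtain ⟨⟨hsurj, hprop⟩, hinj⟩ := hL
  classical
  set N := G.neighborFinset v with hN
  have hNcard : N.card = G.degree v := rfl
  have hadj : ∀ u ∈ N, G.Adj v u := fun u hu => (G.mem_neighborFinset v u).mp hu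
  have hdist1 : ∀ u ∈ N, G.dist u v = 1 := fun u hu =>
    SimpleGraph.dist_eq_one_iff_adj.mpr (hadj u hu).symm
  -- distance-1 Lipschitz bounds for neighbors
  have hub : ∀ u ∈ N, ∀ i, colorCode G f u i ≤ colorCode G f v i + 1 := by
    intro u hu i
    have := colorCode_le_add hconn hsurj u v i
    rw [hdist1 u hu] at this; omega
  have hlb : ∀ u ∈ N, ∀ i, colorCode G f v i ≤ colorCode G f u i + 1 := by
    intro u hu i
    have := colorCode_le_add hconn hsurj v u i
    have hd : G.dist v u = 1 := SimpleGraph.dist_eq_one_iff_adj.mpr (hadj u hu)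
    rw [hd] at this; omega
  set C := N.image f with hC
  have hCfv : ∀ i ∈ C, i ≠ f v := by
    intro i hi
    obtain ⟨u, hu, rfl⟩ := Finset.mem_image.mp hi
    exact fun hfu => hprop v u (hadj u hu) hfu.symm
  have hfvC : f v ∉ C := fun hmem => hCfv _ hmem rfl
  have haC : ∀ i ∈ C, colorCode G f v i = 1 := by
    intro i hi
    obtain ⟨u, hu, rfl⟩ := Finset.mem_image.mp hi
    have h1 : colorCode G f v (f u) ≤ 1 := by
      have hle := colorCode_le (G := G) (f := f) (i := f u) v u rfl
      have hd : G.dist v u = 1 := SimpleGraph.dist_eq_one_iff_adj.mpr (hadj u hu)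
      omega
    have h0 : colorCode G f v (f u) ≠ 0 := fun h =>
      hprop v u (hadj u hu) (colorCode_eq_zero hconn hsurj h)
    omega
  -- neighbor code coordinates in colors of C
  have huC : ∀ u ∈ N, ∀ i ∈ C, i ≠ f u →
      colorCode G f u i = 1 ∨ colorCode G f u i = 2 := by
    intro u hu i hi hne
    have h1 := hub u hu i
    rw [haC i hi] at h1
    have h0 : colorCode G f u i ≠ 0 := fun h => hne (colorCode_eq_zero hconn hsurj h).symm
    omega
  have hufv : ∀ u ∈ N, colorCode G f u (f v) = 1 := by
    intro u hu
    have h1 := hub u hu (f v)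
    rw [colorCode_self] at h1
    have h0 : colorCode G f u (f v) ≠ 0 := fun h =>
      hprop v u (hadj u hu) ((colorCode_eq_zero hconn hsurj h).symm)
    omega
  set R := (Finset.univ \ insert (f v) C) with hR
  have hCcard : C.card + 1 ≤ j := by
    have h1 : (insert (f v) C).card = C.card + 1 := Finset.card_insert_of_notMem hfvC
    have h2 := Finset.card_le_univ (insert (f v) C)
    simpa [h1, Fintype.card_fin] using h2
  have hRcard : R.card = j - 1 - C.card := by
    rw [hR, Finset.card_sdiff_of_subset (Finset.subset_univ _), Finset.card_insert_of_notMem hfvC]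
    simp [Fintype.card_fin]
    omega
  -- bound on each fiber
  have hfiber : ∀ i₀ ∈ C, (N.filter fun u => f u = i₀).card
      ≤ 2 ^ (C.card - 1) * 3 ^ (j - 1 - C.card) := by
    intro i₀ hi₀
    have hcardT : Fintype.card ((↥(C.erase i₀) → Fin 2) × (↥R → Fin 3))
        = 2 ^ (C.card - 1) * 3 ^ (j - 1 - C.card) := by
      rw [Fintype.card_prod, Fintype.card_fun, Fintype.card_fun, Fintype.card_coe,
        Fintype.card_coe, Finset.card_erase_of_mem hi₀, hRcard, Fintype.card_fin,
        Fintype.card_fin]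
    have hbound : ∀ u ∈ N.filter (fun u => f u = i₀), ∀ i : ↥R,
        colorCode G f u ↑i + 1 - colorCode G f v ↑i < 3 := by
      intro u hu i
      have hu' := Finset.mem_filter.mp hu
      have := hub u hu'.1 ↑i
      omega
    set Φ : V → ((↥(C.erase i₀) → Fin 2) × (↥R → Fin 3)) := fun u =>
      (fun i => if colorCode G f u ↑i = 1 then (0 : Fin 2) else 1,
       fun i => (⟨(colorCode G f u ↑i + 1 - colorCode G f v ↑i) % 3,
         Nat.mod_lt _ (by norm_num)⟩ : Fin 3)) with hΦ
    have hinjΦ : Set.InjOn Φ (N.filter fun u => f u = i₀) := by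
      intro u₁ hu₁ u₂ hu₂ heq
      have hu₁' := Finset.mem_filter.mp hu₁
      have hu₂' := Finset.mem_filter.mp hu₂
      apply hinj
      funext i
      by_cases hifv : i = f v
      · subst hifv; rw [hufv u₁ hu₁'.1, hufv u₂ hu₂'.1]
      by_cases hiC : i ∈ C
      · by_cases hii₀ : i = i₀
        · subst hii₀
          have e1 : colorCode G f u₁ i = 0 := by rw [← hu₁'.2]; exact colorCode_self u₁
          have e2 : colorCode G f u₂ i = 0 := by rw [← hu₂'.2]; exact colorCode_self u₂
          rw [e1, e2]
        · have hiE : i ∈ C.erase i₀ := Finset.mem_erase.mpr ⟨hii₀, hiC⟩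
          have h1 := congrFun (congrArg Prod.fst heq) ⟨i, hiE⟩
          simp only [hΦ] at h1
          have hx₁ := huC u₁ hu₁'.1 i hiC (by rw [hu₁'.2]; exact hii₀)
          have hx₂ := huC u₂ hu₂'.1 i hiC (by rw [hu₂'.2]; exact hii₀)
          rcases hx₁ with hx₁ | hx₁ <;> rcases hx₂ with hx₂ | hx₂ <;>
            simp [hx₁, hx₂] at h1 ⊢
      · have hiR : i ∈ R := by
          rw [hR]
          simp [Finset.mem_sdiff, Finset.mem_insert, hifv, hiC]
        have h2 := congrFun (congrArg Prod.snd heq) ⟨i, hiR⟩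
        simp only [hΦ] at h2
        have hv₁ := hbound u₁ hu₁ ⟨i, hiR⟩
        have hv₂ := hbound u₂ hu₂ ⟨i, hiR⟩
        have hl₁ := hlb u₁ hu₁'.1 i
        have hl₂ := hlb u₂ hu₂'.1 i
        have : colorCode G f u₁ ↑(⟨i, hiR⟩ : ↥R) + 1 - colorCode G f v ↑(⟨i, hiR⟩ : ↥R)
            = colorCode G f u₂ ↑(⟨i, hiR⟩ : ↥R) + 1 - colorCode G f v ↑(⟨i, hiR⟩ : ↥R) := by
          have h3 := congrArg Fin.val h2
          simpa [Nat.mod_eq_of_lt hv₁, Nat.mod_eq_of_lt hv₂] using h3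
        simp only at this
        omega
    calc (N.filter fun u => f u = i₀).card
        ≤ (Finset.univ : Finset ((↥(C.erase i₀) → Fin 2) × (↥R → Fin 3))).card :=
          Finset.card_le_card_of_injOn Φ (fun _ _ => Finset.mem_univ _) hinjΦ
      _ = 2 ^ (C.card - 1) * 3 ^ (j - 1 - C.card) := by
          rw [Finset.card_univ, hcardT]
  -- put it together
  have hcover : ∀ u ∈ N, f u ∈ C := fun u hu => Finset.mem_image_of_mem f hu
  have hsum : N.card = ∑ i₀ ∈ C, (N.filter fun u => f u = i₀).card :=
    Finset.card_eq_sum_card_fiberwise hcover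
  have hle : N.card ≤ C.card * (2 ^ (C.card - 1) * 3 ^ (j - 1 - C.card)) := by
    rw [hsum]
    have := Finset.sum_le_card_nsmul C _ _ hfiber
    simpa [smul_eq_mul] using this
  have hCpos : 1 ≤ C.card := by
    have : N.Nonempty := Finset.card_pos.mp (by omega)
    obtain ⟨u, hu⟩ := this
    exact Finset.card_pos.mpr ⟨f u, hcover u hu⟩
  have := arith_main hCpos hCcard hjk hk
  omega

/-- The locating chromatic number: the least `k` admitting a locating `k`-coloring. -/
noncomputable def locatingChromaticNumber {V : Type*} (G : SimpleGraph V) : ℕ :=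
  sInf {k : ℕ | ∃ f : V → Fin k, IsLocatingColoring G k f}

/-- Contrapositive form of Theorem 2.3: if `T` is a finite tree with
`Δ(T) > 4 * 3^(k-3)` for some `k ≥ 3`, then `χ_L(T) > k`; equivalently, `T` admits
no locating `k`-coloring. -/
theorem locatingChromaticNumber_gt_of_maxDegree {V : Type*} [Fintype V]
    (G : SimpleGraph V) [DecidableRel G.Adj] (hT : G.IsTree) (k : ℕ) (hk : 3 ≤ k)
    (h : 4 * 3 ^ (k - 3) < G.maxDegree) :
    k < locatingChromaticNumber G ∧ ¬ ∃ f : V → Fin k, IsLocatingColoring G k f := by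
  classical
  have hconn := hT.isConnected
  have hVne : Nonempty V := by
    by_contra hV
    rw [not_nonempty_iff] at hV
    have h0 : G.maxDegree ≤ 0 :=
      SimpleGraph.maxDegree_le_of_forall_degree_le _ 0 (fun v => isEmptyElim v)
    omega
  obtain ⟨v, hv⟩ := G.exists_maximal_degree_vertex
  have hdeg : 4 * 3 ^ (k - 3) < G.degree v := hv ▸ h
  have key : ∀ j ≤ k, ¬ ∃ f : V → Fin j, IsLocatingColoring G j f := by
    rintro j hj ⟨f, hL⟩
    exact key_count G hconn hL v hk hj hdeg
  constructor
  · let e := Fintype.equivFin V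
    have hmem : Fintype.card V ∈ {n : ℕ | ∃ f : V → Fin n, IsLocatingColoring G n f} := by
      refine ⟨e, ⟨⟨e.surjective, fun u w hadj heq => G.ne_of_adj hadj (e.injective heq)⟩, ?_⟩⟩
      intro x y hxy
      have h0 : colorCode G (⇑e) y (e x) = 0 := by rw [← hxy]; exact colorCode_self x
      exact e.injective (colorCode_eq_zero hconn e.surjective h0).symm
    have hS : locatingChromaticNumber G ∈ {n : ℕ | ∃ f : V → Fin n, IsLocatingColoring G n f} :=
      Nat.sInf_mem ⟨_, hmem⟩
    by_contra hlt
    push_neg at hlt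
    obtain ⟨f, hf⟩ := hS
    exact key _ hlt ⟨f, hf⟩
  · exact key k le_rfl
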